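/- Let V̄ = ⊕_{a∈ℤ} V̄^a be a finite-dimensional ℤ-graded k-vector space, f_a := dim V̄^a, and let Q̄ be a nondegenerate quadratic form on V̄ compatible with the grading. Then f_a = f_{−a} for all a. If moreover E²_*V̄ ≠ ∅, then f_0 ≥ f_{−2} ≥ f_{−4} ≥ ⋯, f_{−1} ≥ f_{−3} ≥ f_{−5} ≥ ⋯, and f_a is even for every odd a. -/

import Mathlib

universe u v
open Module LinearMap in

/-- A nondegenerate alternating bilinear form on a finite-dimensional space
has even dimension. -/
lemma even_finrank_of_alt_nondeg {k : Type u} [Field k] (n : ℕ) :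
    ∀ {M : Type v} [AddCommGroup M] [Module k M] [FiniteDimensional k M]
      (B : LinearMap.BilinForm k M), B.IsAlt → B.Nondegenerate →
      Module.finrank k M = n → Even n := by
  induction n using Nat.strong_induction_on with
  | _ n ih =>
    intro M _ _ _ B halt hnd hrank
    rcases Nat.eq_zero_or_pos n with h0 | hpos
    · simp [h0]
    have hfr : 0 < Module.finrank k M := hrank ▸ hpos
    have : Nontrivial M := Module.nontrivial_of_finrank_pos hfr
    obtain ⟨x, hx⟩ := exists_ne (0 : M)
    have hy : ∃ y, B x y ≠ 0 := by
      by_contra h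
      push_neg at h
      exact hx (hnd.1 x h)
    obtain ⟨y, hxy⟩ := hy
    have hyx : B y x ≠ 0 := fun h => hxy (halt.isRefl y x h)
    set U : Submodule k M := Submodule.span k {x, y} with hU
    have hxU : x ∈ U := Submodule.subset_span (by simp)
    have hyU : y ∈ U := Submodule.subset_span (by simp)
    have hli : LinearIndependent k ![x, y] := by
      rw [LinearIndependent.pair_iff]
      intro s t hst
      have h1 := congrArg (fun u => B u y) hst
      have h2 := congrArg (fun u => B u x) hst
      simp only [map_add, _root_.map_smul, LinearMap.add_apply, LinearMap.smul_apply,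
        smul_eq_mul, halt.self_eq_zero, mul_zero, add_zero, zero_add, map_zero,
        LinearMap.zero_apply] at h1 h2
      constructor
      · rcases mul_eq_zero.mp h1 with h | h
        · exact h
        · exact absurd h hxy
      · rcases mul_eq_zero.mp h2 with h | h
        · exact h
        · exact absurd h hyx
    have hUrank : Module.finrank k U = 2 := by
      have hr : Set.range ![x, y] = {x, y} := by
        ext z
        simp [Fin.exists_fin_two, or_comm]
      have := finrank_span_eq_card hli
      rw [hr] at this
      simpa using this
    have hrestU : (B.restrict U).Nondegenerate := by
      refine (LinearMap.IsRefl.nondegenerate_iff_separatingLeft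
        (show (B.restrict U).IsAlt from fun z => halt z).isRefl).mpr ?_
      rintro ⟨u, hu⟩ h
      obtain ⟨a, b, rfl⟩ := Submodule.mem_span_pair.mp hu
      have h1 := h ⟨y, hyU⟩
      have h2 := h ⟨x, hxU⟩
      simp only [LinearMap.BilinForm.restrict_apply, LinearMap.domRestrict₁₂_apply,
        LinearMap.domRestrict_apply, map_add, _root_.map_smul, LinearMap.add_apply,
        LinearMap.smul_apply, smul_eq_mul,
        halt.self_eq_zero, mul_zero, add_zero, zero_add] at h1 h2
      have ha : a = 0 := by
        rcases mul_eq_zero.mp h1 with h' | h'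
        · exact h'
        · exact absurd h' hxy
      have hb : b = 0 := by
        rcases mul_eq_zero.mp h2 with h' | h'
        · exact h'
        · exact absurd h' hyx
      ext
      simp [ha, hb]
    have hcompl := B.isCompl_orthogonal_of_restrict_nondegenerate halt.isRefl hrestU
    set O : Submodule k M := B.orthogonal U with hO
    have hOrank : Module.finrank k O = Module.finrank k M - Module.finrank k U :=
      LinearMap.BilinForm.finrank_orthogonal hnd U
    have hOnd : (B.restrict O).Nondegenerate := by
      apply B.nondegenerate_restrict_of_disjoint_orthogonal halt.isRefl
      rw [hO, LinearMap.BilinForm.orthogonal_orthogonal hnd halt.isRefl]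
      exact hcompl.disjoint.symm
    have hOalt : (B.restrict O).IsAlt := fun z => halt z
    have hUle : Module.finrank k U ≤ Module.finrank k M := U.finrank_le
    have h2n : 2 ≤ n := by omega
    have hlt : n - 2 < n := by omega
    have := ih (n - 2) hlt (B.restrict O) hOalt hOnd (by omega)
    obtain ⟨m, hm⟩ := this
    exact ⟨m + 1, by omega⟩





open QuadraticMap

variable {k V : Type*}

/-- The perpendicular of a set `S ⊆ V` with respect to the bilinear form
`⟨x,y⟩ = Q(x+y) - Q x - Q y` associated to a quadratic form `Q`. -/
def perp [Field k] [AddCommGroup V] [Module k V] (Q : QuadraticForm k V) (S : Set V) :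
    Submodule k V where
  carrier := {x | ∀ y ∈ S, polar Q x y = 0}
  add_mem' := by
    intro a b ha hb y hy
    rw [polar_add_left, ha y hy, hb y hy, add_zero]
  zero_mem' := by
    intro y hy
    simp [polar]
  smul_mem' := by
    intro c a ha y hy
    rw [polar_smul_left, ha y hy, smul_zero]

/-- The radical `R = {x ∈ V : ⟨x, V⟩ = 0}` of the bilinear form associated to `Q`. -/
def rad [Field k] [AddCommGroup V] [Module k V] (Q : QuadraticForm k V) : Submodule k V :=
  perp Q Set.univ

/-- `Q` is nondegenerate: its restriction to the radical of the associated bilinear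
form is injective. -/
def QNondeg [Field k] [AddCommGroup V] [Module k V] (Q : QuadraticForm k V) : Prop :=
  Set.InjOn Q (rad Q : Set V)

/-- `𝓜̃_Q`: the set of nilpotent endomorphisms `N` with `Q(Nx) = -⟨x, Nx⟩` for all `x`
(equivalently, `1 + N` is a unipotent element of the orthogonal group `O_Q`). -/
def Mtilde [Field k] [AddCommGroup V] [Module k V] (Q : QuadraticForm k V) :
    Set (Module.End k V) :=
  {N | IsNilpotent N ∧ ∀ x, Q (N x) = - polar Q x (N x)}

section Graded

variable [Field k] [AddCommGroup V] [Module k V]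

/-- `Q` is compatible with the grading `W` of `V`: `Q` vanishes on `W a` for `a ≠ 0`
and `⟨W a, W a'⟩ = 0` whenever `a + a' ≠ 0`. -/
def CompatibleGrading (Q : QuadraticForm k V) (W : ℤ → Submodule k V) : Prop :=
  (∀ a : ℤ, a ≠ 0 → ∀ x ∈ W a, Q x = 0) ∧
    ∀ a a' : ℤ, a + a' ≠ 0 → ∀ x ∈ W a, ∀ y ∈ W a', QuadraticMap.polar Q x y = 0

/-- `T ∈ E²V̄`: `T` has degree `2`, is skew-adjoint for the polar form, and
`⟨x, Tx⟩ = 0` for `x ∈ V̄^{-1}`. -/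
def InE2 (Q : QuadraticForm k V) (W : ℤ → Submodule k V) (T : Module.End k V) : Prop :=
  (∀ a : ℤ, ∀ x ∈ W a, T x ∈ W (a + 2)) ∧
  (∀ x y : V, QuadraticMap.polar Q (T x) y + QuadraticMap.polar Q x (T y) = 0) ∧
  (∀ x ∈ W (-1 : ℤ), QuadraticMap.polar Q x (T x) = 0)

/-- `T ∈ E²_*V̄`: moreover, for every even `a = 2n ≥ 0` the quadratic form
`x ↦ Q̄(T^n x)` on `V̄^{-a}` is nondegenerate (injective on the radical of its polar
form), and for every odd `a = 2n+1 ≥ 1` the bilinear form `(x,y) ↦ ⟨x, T^a y⟩` on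
`V̄^{-a}` is a nondegenerate symplectic form. -/
def InE2Star (Q : QuadraticForm k V) (W : ℤ → Submodule k V) (T : Module.End k V) : Prop :=
  InE2 Q W T ∧
  (∀ n : ℕ, Set.InjOn (fun x => Q ((T ^ n) x))
      {x : V | x ∈ W (-(2 * n) : ℤ) ∧
        ∀ y ∈ W (-(2 * n) : ℤ), QuadraticMap.polar Q ((T ^ n) x) ((T ^ n) y) = 0}) ∧
  (∀ n : ℕ,
    (∀ x ∈ W (-(2 * n + 1) : ℤ),
        QuadraticMap.polar Q x ((T ^ (2 * n + 1)) x) = 0) ∧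
    (∀ x ∈ W (-(2 * n + 1) : ℤ),
        (∀ y ∈ W (-(2 * n + 1) : ℤ), QuadraticMap.polar Q x ((T ^ (2 * n + 1)) y) = 0) →
        x = 0))

/-- for a nondegenerate quadratic form compatible with a grading,
`f_a = f_{-a}` for all `a`; and if `E²_*V̄ ≠ ∅` then `f_0 ≥ f_{-2} ≥ f_{-4} ≥ ⋯`,
`f_{-1} ≥ f_{-3} ≥ ⋯`, and `f_a` is even for every odd `a`. -/
theorem stmt6 [FiniteDimensional k V] (W : ℤ → Submodule k V)
    (hgr : DirectSum.IsInternal W) (Q : QuadraticForm k V) (hQ : QNondeg Q)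
    (hcomp : CompatibleGrading Q W) :
    (∀ a : ℤ, Module.finrank k (W a) = Module.finrank k (W (-a))) ∧
    ((∃ T : Module.End k V, InE2Star Q W T) →
      (∀ n : ℕ, Module.finrank k (W (-(2 * (n + 1)) : ℤ)) ≤
          Module.finrank k (W (-(2 * n) : ℤ))) ∧
      (∀ n : ℕ, Module.finrank k (W (-(2 * n + 3) : ℤ)) ≤
          Module.finrank k (W (-(2 * n + 1) : ℤ))) ∧
      (∀ a : ℤ, Odd a → Even (Module.finrank k (W a)))) := by
  have hle : ∀ a : ℤ, Module.finrank k (W a) ≤ Module.finrank k (W (-a)) := by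
    intro a
    by_cases ha : a = 0
    · subst ha; rw [neg_zero]
    · set φ : W a →ₗ[k] Module.Dual k (W (-a)) :=
        (polarBilin Q).compl₁₂ (W a).subtype (W (-a)).subtype with hφ
      have hinj : Function.Injective φ := by
        rw [← LinearMap.ker_eq_bot, eq_bot_iff]
        rintro ⟨x, hx⟩ hker
        have hker' : φ ⟨x, hx⟩ = 0 := LinearMap.mem_ker.mp hker
        have h0 : ∀ y ∈ W (-a), polar Q x y = 0 := by
          intro y hy
          have := congrArg (fun f => f ⟨y, hy⟩) hker'
          simpa [hφ, LinearMap.compl₁₂_apply, polarBilin_apply_apply] using this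
        have hrad : x ∈ rad Q := by
          intro z _
          have hz : z ∈ ⨆ b, W b := by rw [hgr.submodule_iSup_eq_top]; trivial
          refine Submodule.iSup_induction W (motive := fun z => polar Q x z = 0) hz ?_ ?_ ?_
          · intro b y hy
            by_cases hb : a + b = 0
            · have hba : b = -a := by omega
              exact h0 y (hba ▸ hy)
            · exact hcomp.2 a b hb x hx y hy
          · exact polar_zero_right Q x
          · intro u v hu hv; rw [polar_add_right, hu, hv, add_zero]
        have hQx : Q x = 0 := hcomp.1 a ha x hx
        have hx0 : x = 0 := hQ hrad ((rad Q).zero_mem) (by rw [hQx, map_zero])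
        simpa using hx0
      calc Module.finrank k (W a)
          ≤ Module.finrank k (Module.Dual k (W (-a))) :=
            LinearMap.finrank_le_finrank_of_injective hinj
        _ = Module.finrank k (W (-a)) := Subspace.dual_finrank_eq
  have part1 : ∀ a : ℤ, Module.finrank k (W a) = Module.finrank k (W (-a)) :=
    fun a => le_antisymm (hle a) (by have h := hle (-a); rwa [neg_neg] at h)
  refine ⟨part1, ?_⟩
  rintro ⟨T, ⟨⟨hdeg, hskew, -⟩, hEven, hOdd⟩⟩
  have hstep : ∀ x y : V, polar Q x (T y) = - polar Q (T x) y := by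
    intro x y
    exact eq_neg_of_add_eq_zero_right (hskew x y)
  have hTzero : ∀ (m : ℕ) (x : V), T x = 0 → ∀ y, polar Q x ((T ^ (m + 1)) y) = 0 := by
    intro m x hx y
    have h1 : (T ^ (m + 1)) y = T ((T ^ m) y) := by
      rw [pow_succ']; rfl
    rw [h1, hstep, hx, polar_zero_left, neg_zero]
  have mono_even : ∀ n : ℕ, Module.finrank k (W (-(2 * (n + 1)) : ℤ)) ≤
      Module.finrank k (W (-(2 * n) : ℤ)) := by
    intro n
    have hmap : ∀ x ∈ W (-(2 * ((n : ℤ) + 1))), T x ∈ W (-(2 * (n : ℤ))) := by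
      intro x hx
      have h := hdeg _ x hx
      rwa [show (-(2 * ((n : ℤ) + 1)) + 2) = -(2 * (n : ℤ)) by ring] at h
    have hinj : Function.Injective (T.restrict hmap) := by
      rw [← LinearMap.ker_eq_bot, eq_bot_iff]
      rintro ⟨x, hx⟩ hker
      have hTx : T x = 0 := congrArg Subtype.val (LinearMap.mem_ker.mp hker)
      have hpow : (T ^ (n + 1)) x = 0 := by
        rw [pow_succ, Module.End.mul_apply, hTx, map_zero]
      have hset := hEven (n + 1)
      rw [show (-(2 * ((n + 1 : ℕ) : ℤ))) = -(2 * ((n : ℤ) + 1)) by push_cast; ring] at hset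
      have hmem : x ∈ {x : V | x ∈ W (-(2 * ((n : ℤ) + 1))) ∧
          ∀ y ∈ W (-(2 * ((n : ℤ) + 1))),
            polar Q ((T ^ (n + 1)) x) ((T ^ (n + 1)) y) = 0} :=
        ⟨hx, fun y _ => by rw [hpow, polar_zero_left]⟩
      have hmem0 : (0 : V) ∈ {x : V | x ∈ W (-(2 * ((n : ℤ) + 1))) ∧
          ∀ y ∈ W (-(2 * ((n : ℤ) + 1))),
            polar Q ((T ^ (n + 1)) x) ((T ^ (n + 1)) y) = 0} :=
        ⟨zero_mem _, fun y _ => by rw [map_zero, polar_zero_left]⟩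
      have hx0 : x = 0 := hset hmem hmem0 (by simp [hpow])
      simpa using hx0
    exact LinearMap.finrank_le_finrank_of_injective hinj
  have mono_odd : ∀ n : ℕ, Module.finrank k (W (-(2 * n + 3) : ℤ)) ≤
      Module.finrank k (W (-(2 * n + 1) : ℤ)) := by
    intro n
    have hmap : ∀ x ∈ W (-(2 * (n : ℤ) + 3)), T x ∈ W (-(2 * (n : ℤ) + 1)) := by
      intro x hx
      have h := hdeg _ x hx
      rwa [show (-(2 * (n : ℤ) + 3) + 2) = -(2 * (n : ℤ) + 1) by ring] at h
    have hinj : Function.Injective (T.restrict hmap) := by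
      rw [← LinearMap.ker_eq_bot, eq_bot_iff]
      rintro ⟨x, hx⟩ hker
      have hTx : T x = 0 := congrArg Subtype.val (LinearMap.mem_ker.mp hker)
      have hodd := (hOdd (n + 1)).2
      rw [show (-(2 * ((n + 1 : ℕ) : ℤ) + 1)) = -(2 * (n : ℤ) + 3) by push_cast; ring,
        show 2 * (n + 1) + 1 = (2 * n + 2) + 1 by ring] at hodd
      have hx0 : x = 0 := hodd x hx (fun y _ => hTzero (2 * n + 2) x hTx y)
      simpa using hx0
    exact LinearMap.finrank_le_finrank_of_injective hinj
  have evenneg : ∀ n : ℕ, Even (Module.finrank k (W (-(2 * (n : ℤ) + 1)))) := by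
    intro n
    set d : ℤ := -(2 * (n : ℤ) + 1) with hd
    set B : LinearMap.BilinForm k (W d) :=
      (polarBilin Q).compl₁₂ (W d).subtype ((T ^ (2 * n + 1)) ∘ₗ (W d).subtype) with hB
    have hBapp : ∀ x y : W d, B x y = polar Q (x : V) ((T ^ (2 * n + 1)) (y : V)) := by
      intro x y
      simp [hB, LinearMap.compl₁₂_apply, polarBilin_apply_apply]
    have haltB : B.IsAlt := fun x => by rw [hBapp]; exact (hOdd n).1 x x.2
    have hndB : B.Nondegenerate := by
      refine (LinearMap.IsRefl.nondegenerate_iff_separatingLeft haltB.isRefl).mpr ?_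
      intro x hx0
      apply Subtype.ext
      refine (hOdd n).2 x x.2 (fun y hy => ?_)
      have := hx0 ⟨y, hy⟩
      rwa [hBapp] at this
    exact even_finrank_of_alt_nondeg _ B haltB hndB rfl
  refine ⟨mono_even, mono_odd, ?_⟩
  intro a ha
  obtain ⟨m, hm⟩ := ha
  rcases le_or_gt 0 m with hm0 | hm0
  · rw [part1 a]
    have h := evenneg m.toNat
    rwa [show (-(2 * ((m.toNat : ℤ)) + 1)) = -a by rw [Int.toNat_of_nonneg hm0]; omega] at h
  · have h := evenneg (-m - 1).toNat
    rwa [show (-(2 * (((-m - 1).toNat : ℤ)) + 1)) = a by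
      rw [Int.toNat_of_nonneg (by omega)]; omega] at h

end Graded
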